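/- For every word w of length n ≥ 1 over {A, B}, the denominator of the coefficient of w in the Baker–Campbell–Hausdorff series H = log(e^A e^B) divides n! · d_n, where d_n = ∏_{p prime, p < n} p^{max{t : p^t ≤ s_p(n)}}. -/

import Mathlib

/-- Coefficient of the word `w` in the product `X₁ ⋯ X_K` of formal power series in
noncommuting variables, each series being given by its coefficient function `List A → ℚ`. -/
def prodCoeff {A : Type*} : List (List A → ℚ) → List A → ℚ
  | [], [] => 1
  | [], _ :: _ => 0
  | X :: Xs, w => ∑ i ∈ Finset.range (w.length + 1),
      X (List.take i w) * prodCoeff Xs (List.drop i w)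

/-- Coefficient function of `exp` of the single noncommuting variable `a`. -/
def expCoeff {A : Type*} [DecidableEq A] (a : A) (w : List A) : ℚ :=
  if ∀ x ∈ w, x = a then 1 / (Nat.factorial w.length) else 0

/-- Alphabet `{A, B}` modelled as `Bool`, with `A = false`, `B = true`.
Coefficient function of `Y = e^A e^B - 1`. -/
def Ycoeff (w : List Bool) : ℚ :=
  prodCoeff [expCoeff false, expCoeff true] w - (if w.isEmpty then 1 else 0)

/-- Coefficient of `w` in the BCH series `H = log(e^A e^B) = Σ_{k≥1} ((-1)^{k+1}/k) Yᵏ`.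
Since `Y` has no constant term, the series may be truncated at `k = |w|`. -/
def bchCoeff (w : List Bool) : ℚ :=
  ∑ k ∈ Finset.Icc 1 w.length,
    ((-1 : ℚ) ^ (k + 1) / k) * prodCoeff (List.replicate k Ycoeff) w

/-- base-p digit sum -/
def sp (p n : ℕ) : ℕ := (Nat.digits p n).sum

/-- `d n = ∏_{p prime, p < n} p ^ (max { t : p ^ t ≤ sₚ(n) })`. -/
def dn (n : ℕ) : ℕ :=
  ∏ p ∈ (Finset.range n).filter Nat.Prime, p ^ Nat.log p (sp p n)


lemma expCoeff_pos {A : Type*} [DecidableEq A] (a : A) (w : List A)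
    (h : ∀ x ∈ w, x = a) : expCoeff a w = 1 / (Nat.factorial w.length) := if_pos h

lemma expCoeff_neg {A : Type*} [DecidableEq A] (a : A) (w : List A)
    (h : ¬ ∀ x ∈ w, x = a) : expCoeff a w = 0 := if_neg h

lemma prodCoeff_nil_nil {A : Type*} : prodCoeff ([] : List (List A → ℚ)) [] = 1 := rfl

lemma prodCoeff_nil_ne {A : Type*} (w : List A) (hw : w ≠ []) :
    prodCoeff [] w = 0 := by
  cases w with
  | nil => exact absurd rfl hw
  | cons a l => rfl

lemma prodCoeff_cons {A : Type*} (X : List A → ℚ) (Xs : List (List A → ℚ)) (w : List A) :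
    prodCoeff (X :: Xs) w = ∑ i ∈ Finset.range (w.length + 1),
      X (List.take i w) * prodCoeff Xs (List.drop i w) := by
  rw [prodCoeff]

lemma prodCoeff_singleton {A : Type*} (X : List A → ℚ) (w : List A) :
    prodCoeff [X] w = X w := by
  rw [prodCoeff_cons]
  rw [Finset.sum_eq_single w.length]
  · rw [List.take_length, List.drop_length, prodCoeff_nil_nil, mul_one]
  · intro i hi hne
    have hi' : i < w.length := by
      have := Finset.mem_range.mp hi; omega
    rw [prodCoeff_nil_ne _ (by simp [← List.length_pos_iff]; omega), mul_zero]
  · intro h; exact absurd (Finset.self_mem_range_succ _) h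

lemma prodCoeff_pair {A : Type*} (X Y : List A → ℚ) (w : List A) :
    prodCoeff [X, Y] w = ∑ i ∈ Finset.range (w.length + 1),
      X (List.take i w) * Y (List.drop i w) := by
  rw [prodCoeff_cons]
  exact Finset.sum_congr rfl fun i _ => by rw [prodCoeff_singleton]

lemma Ycoeff_nil : Ycoeff [] = 0 := by
  simp [Ycoeff, prodCoeff_pair]
  norm_num [expCoeff]

lemma Ycoeff_structure (v : List Bool) (hv : v ≠ []) :
    Ycoeff v = 0 ∨ ∃ a b : ℕ, a + b = v.length ∧
      Ycoeff v = 1 / ((a.factorial : ℚ) * b.factorial) := by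
  classical
  have hY : Ycoeff v = ∑ i ∈ Finset.range (v.length + 1),
      expCoeff false (v.take i) * expCoeff true (v.drop i) := by
    simp [Ycoeff, prodCoeff_pair, hv]
  set f : ℕ → ℚ := fun i => expCoeff false (v.take i) * expCoeff true (v.drop i) with hf
  have hzero1 : ∀ i, ¬ (∀ x ∈ v.take i, x = false) → f i = 0 := by
    intro i h
    show expCoeff false (v.take i) * expCoeff true (v.drop i) = 0
    rw [expCoeff_neg _ _ h, zero_mul]
  have hzero2 : ∀ i, ¬ (∀ x ∈ v.drop i, x = true) → f i = 0 := by
    intro i h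
    show expCoeff false (v.take i) * expCoeff true (v.drop i) = 0
    rw [expCoeff_neg _ _ h, mul_zero]
  have huniq : ∀ i ∈ Finset.range (v.length + 1), ∀ j ∈ Finset.range (v.length + 1),
      f i ≠ 0 → f j ≠ 0 → i = j := by
    intro i hi j hj hfi hfj
    by_contra hne
    wlog hij : i < j generalizing i j
    · exact this j hj i hi hfj hfi (Ne.symm hne) (by omega)
    have hjlen : j ≤ v.length := by have := Finset.mem_range.mp hj; omega
    have hilen : i < v.length := lt_of_lt_of_le hij hjlen
    have h1 : ∀ x ∈ v.take j, x = false := by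
      by_contra h; exact hfj (hzero1 j h)
    have h2 : ∀ x ∈ v.drop i, x = true := by
      by_contra h; exact hfi (hzero2 i h)
    have e1 : v[i] = false := by
      have hlt : i < (v.take j).length := by simp; omega
      have := h1 (v.take j)[i] (List.getElem_mem hlt)
      rwa [List.getElem_take] at this
    have e2 : v[i] = true := by
      have hlt : 0 < (v.drop i).length := by simp; omega
      have := h2 (v.drop i)[0] (List.getElem_mem hlt)
      rw [List.getElem_drop] at this
      simpa using this
    rw [e1] at e2; exact Bool.false_ne_true e2
  by_cases hex : ∃ i ∈ Finset.range (v.length + 1), f i ≠ 0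
  · obtain ⟨i0, hi0mem, hi0⟩ := hex
    right
    have hi0len : i0 ≤ v.length := by have := Finset.mem_range.mp hi0mem; omega
    have hsum : Ycoeff v = f i0 := by
      rw [hY]
      exact Finset.sum_eq_single_of_mem i0 hi0mem fun j hj hne => by
        by_contra h; exact hne (huniq j hj i0 hi0mem h hi0)
    have h1 : ∀ x ∈ v.take i0, x = false := by
      by_contra h; exact hi0 (hzero1 i0 h)
    have h2 : ∀ x ∈ v.drop i0, x = true := by
      by_contra h; exact hi0 (hzero2 i0 h)
    refine ⟨i0, v.length - i0, by omega, ?_⟩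
    rw [hsum]
    show expCoeff false (v.take i0) * expCoeff true (v.drop i0) = _
    rw [expCoeff_pos _ _ h1, expCoeff_pos _ _ h2, List.length_take, List.length_drop,
      min_eq_left hi0len, div_mul_div_comm, one_mul]
  · push_neg at hex
    left
    rw [hY]
    exact Finset.sum_eq_zero hex

lemma sp_pos {p n : ℕ} (hp : 2 ≤ p) (hn : n ≠ 0) : 0 < sp p n := by
  have h1 : Nat.digits p n ≠ [] := Nat.digits_ne_nil_iff_ne_zero.mpr hn
  have h2 := Nat.getLast_digit_ne_zero p hn
  have h3 : (Nat.digits p n).getLast h1 ∈ Nat.digits p n := List.getLast_mem h1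
  have h4 := List.single_le_sum (l := Nat.digits p n) (fun x _ => Nat.zero_le x) _ h3
  have : 0 < (Nat.digits p n).getLast h1 := Nat.pos_of_ne_zero h2
  unfold sp; omega

lemma kummer_exact {p : ℕ} (hp : p.Prime) {i m : ℕ} (him : i ≤ m) :
    sp p i + sp p (m - i) = sp p m + (p - 1) * padicValNat p (m.choose i) := by
  haveI := Fact.mk hp
  have h1 := sub_one_mul_padicValNat_factorial (p := p) m
  have h2 := sub_one_mul_padicValNat_factorial (p := p) i
  have h3 := sub_one_mul_padicValNat_factorial (p := p) (m - i)
  have h4 : m.factorial = m.choose i * (i.factorial * (m - i).factorial) := by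
    rw [← Nat.choose_mul_factorial_mul_factorial him, mul_assoc]
  have h5 : padicValNat p m.factorial = padicValNat p (m.choose i)
      + (padicValNat p i.factorial + padicValNat p (m - i).factorial) := by
    rw [h4, padicValNat.mul (Nat.choose_pos him).ne' (by positivity),
      padicValNat.mul (Nat.factorial_ne_zero i) (Nat.factorial_ne_zero (m - i))]
  have h6 : (p - 1) * padicValNat p m.factorial =
      (p - 1) * padicValNat p (m.choose i) + ((p - 1) * padicValNat p i.factorial
        + (p - 1) * padicValNat p (m - i).factorial) := by
    rw [h5]; ring
  rw [h1, h2, h3] at h6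
  have d1 := Nat.digit_sum_le p m
  have d2 := Nat.digit_sum_le p i
  have d3 := Nat.digit_sum_le p (m - i)
  unfold sp
  generalize hA : (p - 1) * padicValNat p (m.choose i) = A at h6 ⊢
  omega

lemma nat_bernoulli' (q : ℕ) : ∀ u : ℕ, 1 + u * q ≤ (q + 1) ^ u := by
  intro u
  induction u with
  | zero => simp
  | succ u ih =>
      have h1 : 1 ≤ (q + 1) ^ u := Nat.one_le_pow _ _ (by omega)
      have h2 : (q + 1) ^ (u + 1) = (q + 1) ^ u * (q + 1) := by ring
      rw [h2]
      nlinarith [ih]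

lemma nat_bernoulli (p : ℕ) (hp : 1 ≤ p) (u : ℕ) : 1 + u * (p - 1) ≤ p ^ u := by
  obtain ⟨q, rfl⟩ : ∃ q, p = q + 1 := ⟨p - 1, by omega⟩
  simpa using nat_bernoulli' q u

lemma arith_key {p s L j : ℕ} (hp : 2 ≤ p) (hL : L < j) (hs : s < p ^ (L + 1)) :
    s + (j - L - 1) * (p - 1) < p ^ j := by
  set u := j - L - 1 with hu
  have hj : j = (L + 1) + u := by omega
  have h1 : 1 + u * (p - 1) ≤ p ^ u := nat_bernoulli p (by omega) u
  have h2 : p ^ j = p ^ (L + 1) * p ^ u := by rw [hj, pow_add]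
  have h3 : 1 ≤ p ^ (L + 1) := Nat.one_le_pow _ _ (by omega)
  have h4 : p ^ (L + 1) * (1 + u * (p - 1)) ≤ p ^ (L + 1) * p ^ u :=
    Nat.mul_le_mul_left _ h1
  have h5 : p ^ (L + 1) + u * (p - 1) ≤ p ^ (L + 1) * (1 + u * (p - 1)) := by
    rw [Nat.mul_add, Nat.mul_one]
    exact Nat.add_le_add_left (Nat.le_mul_of_pos_left _ (by omega)) _
  calc s + u * (p - 1) < p ^ (L + 1) + u * (p - 1) := by omega
    _ ≤ p ^ (L + 1) * (1 + u * (p - 1)) := h5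
    _ ≤ p ^ (L + 1) * p ^ u := h4
    _ = p ^ j := h2.symm

lemma pow_log_dvd_dn {p n : ℕ} (hp : p.Prime) (hpn : p ≤ n) :
    p ^ Nat.log p (sp p n) ∣ dn n := by
  rcases lt_or_eq_of_le hpn with h | h
  · exact Finset.dvd_prod_of_mem _ (by simp [Finset.mem_filter, Finset.mem_range, h, hp])
  · subst h
    have hd1 : Nat.digits p 1 = [1] := by
      rw [Nat.digits_def' hp.one_lt Nat.one_pos]
      simp [Nat.mod_eq_of_lt hp.one_lt, Nat.div_eq_of_lt hp.one_lt]
    have : sp p p = 1 := by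
      unfold sp
      rw [Nat.digits_def' hp.one_lt hp.pos, Nat.mod_self, Nat.div_self hp.pos, hd1]
      simp
    rw [this, Nat.log_one_right, pow_zero]
    exact one_dvd _

lemma dn_ne_zero (n : ℕ) : dn n ≠ 0 := by
  unfold dn
  rw [Finset.prod_ne_zero_iff]
  intro p hp
  have : p.Prime := (Finset.mem_filter.mp hp).2
  exact (pow_pos this.pos _).ne'

lemma sum_int_mul {s : Finset ℕ} {g : ℕ → ℚ} {c : ℚ}
    (h : ∀ i ∈ s, ∃ z : ℤ, g i = c * z) : ∃ z : ℤ, ∑ i ∈ s, g i = c * z := by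
  classical
  induction s using Finset.induction with
  | empty => exact ⟨0, by simp⟩
  | insert a s hx ih =>
      obtain ⟨z1, hz1⟩ := h _ (Finset.mem_insert_self _ _)
      obtain ⟨z2, hz2⟩ := ih fun i hi => h i (Finset.mem_insert_of_mem hi)
      exact ⟨z1 + z2, by rw [Finset.sum_insert hx, hz1, hz2]; push_cast; ring⟩

lemma den_dvd_of_mul_int (q : ℚ) (d : ℕ) (hd : d ≠ 0) (h : ∃ z : ℤ, q * d = z) :
    q.den ∣ d := by
  obtain ⟨z, hz⟩ := h
  have hd' : (d : ℚ) ≠ 0 := by exact_mod_cast hd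
  have hq : q = Rat.divInt z d := by
    rw [Rat.divInt_eq_div]
    field_simp
    push_cast
    linarith [hz]
  have := Rat.den_dvd z d
  rw [← hq] at this
  exact_mod_cast this

lemma key (p : ℕ) (hp : p.Prime) : ∀ k : ℕ, ∀ w : List Bool, ∀ t : ℕ,
    (t = 0 ∨ sp p w.length + (t - 1) * (p - 1) < k) →
    ∃ z : ℤ, (w.length.factorial : ℚ) * prodCoeff (List.replicate k Ycoeff) w
      = (p : ℚ) ^ t * z := by
  intro k
  induction k with
  | zero =>
      intro w t ht
      have ht0 : t = 0 := by
        rcases ht with h | h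
        · exact h
        · omega
      subst ht0
      rcases eq_or_ne w [] with rfl | hw
      · exact ⟨1, by simp [List.replicate_zero, prodCoeff_nil_nil]⟩
      · exact ⟨0, by rw [List.replicate_zero, prodCoeff_nil_ne _ hw]; simp⟩
  | succ k ih =>
      intro w t ht
      rw [List.replicate_succ, prodCoeff_cons, Finset.mul_sum]
      apply sum_int_mul
      intro i hi
      have him : i ≤ w.length := by have := Finset.mem_range.mp hi; omega
      rcases Nat.eq_zero_or_pos i with rfl | hipos
      · exact ⟨0, by rw [List.take_zero, Ycoeff_nil]; simp⟩
      have hvne : w.take i ≠ [] := by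
        intro h
        apply_fun List.length at h
        simp only [List.length_take, List.length_nil] at h
        omega
      rcases Ycoeff_structure (w.take i) hvne with h0 | ⟨a, b, hab, hY⟩
      · exact ⟨0, by rw [h0]; simp⟩
      have hvlen : (w.take i).length = i := by rw [List.length_take]; omega
      have hulen : (w.drop i).length = w.length - i := List.length_drop
      rw [hvlen] at hab
      set ν := padicValNat p (w.length.choose i) with hν
      set t' := t - min t ν with ht'
      have hIH : t' = 0 ∨ sp p (w.drop i).length + (t' - 1) * (p - 1) < k := by
        rcases Nat.eq_zero_or_pos t' with h | hpos
        · exact Or.inl h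
        right
        have hνt : ν < t := by omega
        have hcond : sp p w.length + (t - 1) * (p - 1) < k + 1 := by
          rcases ht with h | h
          · omega
          · exact h
        have hkum : sp p i + sp p (w.length - i) = sp p w.length + ν * (p - 1) := by
          rw [mul_comm]; exact kummer_exact hp him
        have hsplit : (t - 1) * (p - 1) = (t' - 1) * (p - 1) + ν * (p - 1) := by
          rw [← Nat.add_mul]; congr 1; omega
        have hspi : 1 ≤ sp p i := sp_pos hp.two_le (by omega)
        rw [hulen]
        rw [hsplit] at hcond
        generalize (t' - 1) * (p - 1) = X at hcond ⊢
        generalize ν * (p - 1) = Y at hcond hkum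
        omega
      obtain ⟨z', hz'⟩ := ih (w.drop i) t' hIH
      rw [hulen] at hz'
      have hmin : min t ν ≤ ν := min_le_right _ _
      have hdvd : p ^ (min t ν) ∣ w.length.choose i :=
        dvd_trans (pow_dvd_pow p hmin) pow_padicValNat_dvd
      obtain ⟨c, hc⟩ := hdvd
      have h1 : w.length.choose i * i.factorial * (w.length - i).factorial
          = w.length.factorial := Nat.choose_mul_factorial_mul_factorial him
      have h2 : i.choose a * a.factorial * b.factorial = i.factorial := by
        have hb : b = i - a := by omega
        subst hb
        exact Nat.choose_mul_factorial_mul_factorial (by omega)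
      have hnat : w.length.factorial = w.length.choose i * i.choose a
          * (a.factorial * b.factorial * (w.length - i).factorial) := by
        rw [← h1, ← h2]; ring
      have hne : ((a.factorial : ℚ) * b.factorial) ≠ 0 := by positivity
      have hfact : (w.length.factorial : ℚ) * (1 / ((a.factorial : ℚ) * b.factorial))
          = (w.length.choose i : ℚ) * (i.choose a : ℚ) * ((w.length - i).factorial : ℚ) := by
        rw [hnat]
        push_cast
        field_simp
      have hexp : min t ν + t' = t := by omega
      refine ⟨(c : ℤ) * (i.choose a : ℤ) * z', ?_⟩
      rw [hY]
      calc (w.length.factorial : ℚ) * (1 / ((a.factorial : ℚ) * b.factorial)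
              * prodCoeff (List.replicate k Ycoeff) (w.drop i))
          = ((w.length.factorial : ℚ) * (1 / ((a.factorial : ℚ) * b.factorial)))
              * prodCoeff (List.replicate k Ycoeff) (w.drop i) := by ring
        _ = (w.length.choose i : ℚ) * (i.choose a : ℚ)
              * (((w.length - i).factorial : ℚ)
                * prodCoeff (List.replicate k Ycoeff) (w.drop i)) := by rw [hfact]; ring
        _ = (w.length.choose i : ℚ) * (i.choose a : ℚ) * ((p : ℚ) ^ t' * z') := by rw [hz']
        _ = ((p ^ (min t ν) * c : ℕ) : ℚ) * (i.choose a : ℚ) * ((p : ℚ) ^ t' * z') := by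
              rw [← hc]
        _ = (p : ℚ) ^ t * (((c : ℤ) * (i.choose a : ℤ) * z' : ℤ) : ℚ) := by
              have hpp : (p : ℚ) ^ t = (p : ℚ) ^ (t ⊓ ν) * (p : ℚ) ^ t' := by
                rw [← pow_add, hexp]
              rw [hpp]
              push_cast
              ring

theorem den_bchCoeff_dvd (n : ℕ) (hn : 1 ≤ n) (w : List Bool) (hw : w.length = n) :
    (bchCoeff w).den ∣ n.factorial * dn n := by
  have hD : n.factorial * dn n ≠ 0 :=
    Nat.mul_ne_zero (Nat.factorial_ne_zero n) (dn_ne_zero n)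
  apply den_dvd_of_mul_int _ _ hD
  have hterm : ∀ k ∈ Finset.Icc 1 n, ∃ z : ℤ,
      ((-1 : ℚ) ^ (k + 1) / k * prodCoeff (List.replicate k Ycoeff) w)
        * ((n.factorial * dn n : ℕ) : ℚ) = 1 * z := by
    intro k hk
    obtain ⟨hk1, hk2⟩ := Finset.mem_Icc.mp hk
    obtain ⟨z0, hz0⟩ := key 2 Nat.prime_two k w 0 (Or.inl rfl)
    rw [pow_zero, one_mul, hw] at hz0
    have hdvd : (k : ℤ) ∣ (dn n : ℤ) * z0 := by
      rw [Int.natCast_dvd, Int.natAbs_mul, Int.natAbs_natCast]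
      refine (Nat.dvd_iff_prime_pow_dvd_dvd (dn n * z0.natAbs) k).mpr ?_
      intro p j hp hpj
      rcases Nat.eq_zero_or_pos j with rfl | hj
      · simpa using one_dvd _
      have hpk : p ∣ k := dvd_trans (dvd_pow_self p hj.ne') hpj
      have hpkle : p ≤ k := Nat.le_of_dvd (by omega) hpk
      have hpn : p ≤ n := le_trans hpkle hk2
      have hpL : p ^ Nat.log p (sp p n) ∣ dn n := pow_log_dvd_dn hp hpn
      set L := Nat.log p (sp p n) with hL
      rcases le_or_gt j L with hjL | hjL
      · exact Dvd.dvd.mul_right (dvd_trans (pow_dvd_pow p hjL) hpL) _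
      · have hpjk : p ^ j ≤ k := Nat.le_of_dvd (by omega) hpj
        have hslt : sp p n < p ^ (L + 1) := Nat.lt_pow_succ_log_self hp.one_lt _
        have hcond : sp p n + (j - L - 1) * (p - 1) < k :=
          lt_of_lt_of_le (arith_key hp.two_le hjL hslt) hpjk
        obtain ⟨z', hz'⟩ := key p hp k w (j - L) (Or.inr (by rw [hw]; exact hcond))
        rw [hw] at hz'
        have hzz : z0 = (p : ℤ) ^ (j - L) * z' := by
          have h := hz0.symm.trans hz'
          exact_mod_cast h
        have hdvd2 : p ^ (j - L) ∣ z0.natAbs := by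
          have habs : ((p : ℤ) ^ (j - L)).natAbs ∣ z0.natAbs :=
            Int.natAbs_dvd_natAbs.mpr ⟨z', hzz⟩
          simpa [Int.natAbs_pow] using habs
        have hsplit : p ^ j = p ^ L * p ^ (j - L) := by
          rw [← pow_add]; congr 1; omega
        rw [hsplit]
        exact mul_dvd_mul hpL hdvd2
    obtain ⟨y, hy⟩ := hdvd
    refine ⟨(-1) ^ (k + 1) * y, ?_⟩
    have hk0 : (k : ℚ) ≠ 0 := Nat.cast_ne_zero.mpr (by omega)
    have e1 : (((dn n : ℤ) * z0 : ℤ) : ℚ)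
        = (dn n : ℚ) * ((n.factorial : ℚ) * prodCoeff (List.replicate k Ycoeff) w) := by
      rw [hz0]; push_cast; ring
    have e2 : (((dn n : ℤ) * z0 : ℤ) : ℚ) = (k : ℚ) * (y : ℚ) := by
      rw [hy]; push_cast; ring
    have e3 : (dn n : ℚ) * ((n.factorial : ℚ) * prodCoeff (List.replicate k Ycoeff) w)
        = (k : ℚ) * (y : ℚ) := by rw [← e1, e2]
    rw [one_mul]
    calc ((-1 : ℚ) ^ (k + 1) / k * prodCoeff (List.replicate k Ycoeff) w)
          * ((n.factorial * dn n : ℕ) : ℚ)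
        = (-1 : ℚ) ^ (k + 1) * ((dn n : ℚ)
            * ((n.factorial : ℚ) * prodCoeff (List.replicate k Ycoeff) w)) / k := by
          push_cast; ring
      _ = (-1 : ℚ) ^ (k + 1) * ((k : ℚ) * (y : ℚ)) / k := by rw [e3]
      _ = (-1 : ℚ) ^ (k + 1) * (y : ℚ) := by field_simp
      _ = (((-1) ^ (k + 1) * y : ℤ) : ℚ) := by push_cast; ring
  obtain ⟨z, hz⟩ := sum_int_mul (c := (1 : ℚ)) hterm
  rw [one_mul] at hz
  refine ⟨z, ?_⟩
  rw [← hz]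
  unfold bchCoeff
  rw [hw, Finset.sum_mul]
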